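/- Let p ≥ 5 be prime and n ≥ 1. Assuming the Estermann–Weil bound for Kloosterman sums modulo pⁿ, the chromatic number of the Cayley graph Cay((ℤ/pⁿℤ)², {(x,y) : xy = 1}) is at least √p/4. -/

import Mathlib

/-- The hyperbola graph `H(R) = Cay(R², {(x,y) : xy = 1})`. -/
def hgraph (R : Type) [CommRing R] : SimpleGraph (R × R) :=
  SimpleGraph.fromRel (fun v w => (w.1 - v.1) * (w.2 - v.2) = 1)

/-- The Kloosterman sum `Kl(u,v,m) = Σ_{x ∈ (ℤ/mℤ)*} e^{2πi(ux + vx⁻¹)/m}`. -/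
noncomputable def kl (m : ℕ) (hm : m ≠ 0) (u v : ZMod m) : ℂ :=
  haveI : NeZero m := ⟨hm⟩
  ∑ x : (ZMod m)ˣ,
    Complex.exp (2 * Real.pi * Complex.I *
      ((u * (x : ZMod m) + v * ((x⁻¹ : (ZMod m)ˣ) : ZMod m)).val : ℕ) / m)

open Finset Complex

section FourierAux

variable {m : ℕ} [NeZero m]

/-- The standard additive character of `ZMod m`, valued in `ℂ`. -/
noncomputable def psiC : AddChar (ZMod m) ℂ := ZMod.stdAddChar

lemma psiC_apply (a : ZMod m) : psiC a = Complex.exp (2 * Real.pi * Complex.I * a.val / m) := by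
  rw [psiC, ZMod.stdAddChar_apply, ZMod.toCircle_apply]

lemma psiC_abs (a : ZMod m) : ‖psiC a‖ = 1 := by
  rw [psiC, ZMod.stdAddChar_apply]; exact Circle.norm_coe _

lemma psiC_conj (a : ZMod m) : (starRingEnd ℂ) (psiC a) = psiC (-a) := by
  have h1 : psiC a * psiC (-a) = 1 := by
    rw [← AddChar.map_add_eq_mul, add_neg_cancel, AddChar.map_zero_eq_one]
  have h2 : (starRingEnd ℂ) (psiC a) * psiC a = 1 := by
    rw [mul_comm, Complex.mul_conj, Complex.normSq_eq_norm_sq, psiC_abs]; norm_num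
  calc (starRingEnd ℂ) (psiC a)
      = (starRingEnd ℂ) (psiC a) * (psiC a * psiC (-a)) := by rw [h1, mul_one]
    _ = ((starRingEnd ℂ) (psiC a) * psiC a) * psiC (-a) := by ring
    _ = psiC (-a) := by rw [h2, one_mul]

lemma psiC_sum (b : ZMod m) : ∑ u : ZMod m, psiC (u * b) = if b = 0 then (m : ℂ) else 0 := by
  have := AddChar.sum_mulShift (ψ := ZMod.stdAddChar (N := m)) b (ZMod.isPrimitive_stdAddChar m)
  rw [ZMod.card] at this
  simpa [psiC, mul_comm] using this

/-- 2D orthogonality. -/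
lemma psiC_sum2 (c : ZMod m × ZMod m) :
    ∑ w : ZMod m × ZMod m, psiC (w.1 * c.1) * psiC (w.2 * c.2)
      = if c = 0 then ((m : ℂ))^2 else 0 := by
  rw [Fintype.sum_prod_type]
  have : ∀ u : ZMod m, ∑ v : ZMod m, psiC (u * c.1) * psiC (v * c.2)
      = psiC (u * c.1) * ∑ v : ZMod m, psiC (v * c.2) := by
    intro u; rw [Finset.mul_sum]
  simp_rw [this, ← Finset.sum_mul, psiC_sum]
  rcases eq_or_ne c 0 with h | h
  · simp [h, sq]
  · rw [if_neg h]
    have h' : ¬(c.1 = 0 ∧ c.2 = 0) := fun hc => h (Prod.ext hc.1 hc.2)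
    rcases not_and_or.mp h' with h1 | h1 <;> simp [h1]

/-- The 2D character. -/
noncomputable def PsiC (w a : ZMod m × ZMod m) : ℂ := psiC (w.1 * a.1 + w.2 * a.2)

/-- The key Fourier identity. -/
lemma keyId (A S : Finset (ZMod m × ZMod m)) :
    ∑ w : ZMod m × ZMod m,
      (∑ a ∈ A, PsiC w a) * ((∑ s ∈ S, PsiC w s) * (starRingEnd ℂ) (∑ t ∈ S, PsiC w t))
    = (m : ℂ)^2 * ((A ×ˢ S).filter (fun x => x.1 + x.2 ∈ S)).card := by
  have point : ∀ (w a s t : ZMod m × ZMod m),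
      PsiC w a * (PsiC w s * (starRingEnd ℂ) (PsiC w t))
      = psiC (w.1 * (a.1 + s.1 - t.1)) * psiC (w.2 * (a.2 + s.2 - t.2)) := by
    intro w a s t
    rw [PsiC, PsiC, PsiC, psiC_conj, ← AddChar.map_add_eq_mul, ← AddChar.map_add_eq_mul,
      ← AddChar.map_add_eq_mul]
    congr 1
    ring
  calc
    ∑ w : ZMod m × ZMod m,
        (∑ a ∈ A, PsiC w a) * ((∑ s ∈ S, PsiC w s) * (starRingEnd ℂ) (∑ t ∈ S, PsiC w t))
      = ∑ w : ZMod m × ZMod m, ∑ a ∈ A, ∑ s ∈ S, ∑ t ∈ S,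
          psiC (w.1 * (a.1 + s.1 - t.1)) * psiC (w.2 * (a.2 + s.2 - t.2)) := by
        refine Finset.sum_congr rfl fun w _ => ?_
        rw [map_sum, Finset.sum_mul_sum, Finset.sum_mul_sum]
        simp_rw [Finset.mul_sum, point]
    _ = ∑ a ∈ A, ∑ s ∈ S, ∑ t ∈ S, ∑ w : ZMod m × ZMod m,
          psiC (w.1 * (a.1 + s.1 - t.1)) * psiC (w.2 * (a.2 + s.2 - t.2)) := by
        rw [Finset.sum_comm]
        refine Finset.sum_congr rfl fun a _ => ?_
        rw [Finset.sum_comm]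
        refine Finset.sum_congr rfl fun s _ => ?_
        rw [Finset.sum_comm]
    _ = ∑ a ∈ A, ∑ s ∈ S, ∑ t ∈ S, (if t = a + s then ((m:ℂ))^2 else 0) := by
        refine Finset.sum_congr rfl fun a _ => Finset.sum_congr rfl fun s _ =>
          Finset.sum_congr rfl fun t _ => ?_
        have h2 := psiC_sum2 (m := m) (a + s - t)
        simp only [Prod.fst_add, Prod.snd_add, Prod.fst_sub, Prod.snd_sub] at h2
        rw [h2, if_congr (Iff.trans sub_eq_zero eq_comm) rfl rfl]
    _ = ∑ a ∈ A, ∑ s ∈ S, (if a + s ∈ S then ((m:ℂ))^2 else 0) := by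
        refine Finset.sum_congr rfl fun a _ => Finset.sum_congr rfl fun s _ => ?_
        rw [Finset.sum_ite_eq' S (a + s) (fun _ => ((m:ℂ))^2)]
    _ = (m : ℂ)^2 * ((A ×ˢ S).filter (fun x => x.1 + x.2 ∈ S)).card := by
        rw [← Finset.sum_product']
        rw [← Finset.sum_filter]
        rw [Finset.sum_const, nsmul_eq_mul, mul_comm]

/-- The connection set of the hyperbola graph, as a finset. -/
noncomputable def hypA (m : ℕ) [NeZero m] : Finset (ZMod m × ZMod m) :=
  Finset.univ.image (fun x : (ZMod m)ˣ => ((x : ZMod m), ((x⁻¹ : (ZMod m)ˣ) : ZMod m)))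

lemma hypA_sum (hm : m ≠ 0) (w : ZMod m × ZMod m) :
    ∑ a ∈ hypA m, PsiC w a = kl m hm w.1 w.2 := by
  rw [hypA, Finset.sum_image (by
    intro x _ y _ h
    exact Units.ext (congrArg Prod.fst h))]
  rw [kl]
  refine Finset.sum_congr rfl fun x _ => ?_
  rw [PsiC, psiC_apply]

lemma kl_zero (hm : m ≠ 0) : kl m hm 0 0 = (m.totient : ℂ) := by
  rw [kl]
  simp only [zero_mul, add_zero, ZMod.val_zero, Nat.cast_zero, mul_zero, zero_div,
    Complex.exp_zero]
  rw [Finset.sum_const, Finset.card_univ, ZMod.card_units_eq_totient, nsmul_eq_mul, mul_one]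

lemma hypA_indep_filter (hm2 : 1 < m) (S : Finset (ZMod m × ZMod m))
    (hS : ∀ s ∈ S, ∀ t ∈ S, ¬ (hgraph (ZMod m)).Adj s t) :
    ((hypA m ×ˢ S).filter (fun x => x.1 + x.2 ∈ S)) = ∅ := by
  haveI : Nontrivial (ZMod m) := ZMod.nontrivial_iff.mpr (by omega)
  rw [Finset.filter_eq_empty_iff]
  rintro ⟨a, s⟩ hx hmem
  rw [Finset.mem_product] at hx
  obtain ⟨ha, hs⟩ := hx
  rw [hypA, Finset.mem_image] at ha
  obtain ⟨u, -, rfl⟩ := ha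
  dsimp only at hmem ⊢
  refine hS s hs _ hmem ?_
  constructor
  · intro h
    have h1 : s.1 = (u : ZMod m) + s.1 := congrArg Prod.fst h
    exact u.ne_zero (right_eq_add.mp h1)
  · left
    simp [Prod.fst_add, Prod.snd_add, add_sub_cancel_right]

lemma parsevalC (S : Finset (ZMod m × ZMod m)) :
    ∑ w : ZMod m × ZMod m,
      (∑ s ∈ S, PsiC w s) * (starRingEnd ℂ) (∑ t ∈ S, PsiC w t)
      = (m : ℂ)^2 * S.card := by
  have h := keyId ({0} : Finset (ZMod m × ZMod m)) S
  have h1 : ∀ w : ZMod m × ZMod m, ∑ a ∈ ({0} : Finset (ZMod m × ZMod m)), PsiC w a = 1 := by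
    intro w
    rw [Finset.sum_singleton, PsiC]
    simp [AddChar.map_zero_eq_one]
  simp_rw [h1, one_mul] at h
  rw [h]
  congr 2
  rw [Finset.filter_true_of_mem (fun x hx => by
    rw [Finset.mem_product, Finset.mem_singleton] at hx
    rw [hx.1, zero_add]; exact hx.2)]
  rw [Finset.singleton_product, Finset.card_map]

/-- The main spectral inequality: for an independent set `S` of the hyperbola graph,
`totient m * |S| ≤ λ m²` where `λ` bounds the nontrivial Kloosterman sums. -/
lemma main_ineq (hm : m ≠ 0) (hm2 : 1 < m) (S : Finset (ZMod m × ZMod m))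
    (hS : ∀ s ∈ S, ∀ t ∈ S, ¬ (hgraph (ZMod m)).Adj s t)
    (lam : ℝ) (hlam0 : 0 ≤ lam)
    (hlam : ∀ w : ZMod m × ZMod m, w ≠ 0 → ‖kl m hm w.1 w.2‖ ≤ lam) :
    (m.totient : ℝ) * S.card ≤ lam * m^2 := by
  classical
  set F : ZMod m × ZMod m → ℂ := fun w => ∑ s ∈ S, PsiC w s with hF
  set G : ZMod m × ZMod m → ℝ := fun w => ‖F w‖^2 with hG
  have hG0 : ∀ w, 0 ≤ G w := fun w => sq_nonneg _
  have hFG : ∀ w, F w * (starRingEnd ℂ) (F w) = ((G w : ℝ) : ℂ) := by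
    intro w
    rw [Complex.mul_conj]
    norm_cast
    exact (Complex.sq_norm (F w)).symm
  have hpar : ∑ w : ZMod m × ZMod m, G w = (m:ℝ)^2 * S.card := by
    have hp2 : ∑ w : ZMod m × ZMod m, F w * (starRingEnd ℂ) (F w)
        = (m : ℂ)^2 * S.card := parsevalC S
    simp_rw [hFG] at hp2
    apply Complex.ofReal_injective
    push_cast
    rw [← hp2]
  have hzero : ∑ w : ZMod m × ZMod m, kl m hm w.1 w.2 * ((G w : ℝ) : ℂ) = 0 := by
    have h : ∑ w : ZMod m × ZMod m,
        (∑ a ∈ hypA m, PsiC w a) * (F w * (starRingEnd ℂ) (F w))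
        = (m : ℂ)^2 * (((hypA m) ×ˢ S).filter (fun x => x.1 + x.2 ∈ S)).card :=
      keyId (hypA m) S
    simp_rw [hypA_sum hm, hFG] at h
    rw [h, hypA_indep_filter hm2 S hS]
    simp
  have hsplit := Finset.sum_erase_add Finset.univ
    (fun w : ZMod m × ZMod m => kl m hm w.1 w.2 * ((G w : ℝ) : ℂ)) (Finset.mem_univ 0)
  rw [hzero] at hsplit
  have hF0 : F 0 = (S.card : ℂ) := by
    show (∑ s ∈ S, PsiC (0 : ZMod m × ZMod m) s) = _
    simp [PsiC, AddChar.map_zero_eq_one]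
  have hG00 : G 0 = (S.card : ℝ)^2 := by
    show ‖F 0‖ ^ 2 = _
    rw [hF0]
    simp
  have hkl0 : kl m hm (0 : ZMod m × ZMod m).1 (0 : ZMod m × ZMod m).2 = (m.totient : ℂ) :=
    kl_zero hm
  have heq : ((m.totient : ℝ) * (S.card:ℝ)^2 : ℝ) = ‖
      (∑ w ∈ Finset.univ.erase (0 : ZMod m × ZMod m), kl m hm w.1 w.2 * ((G w : ℝ) : ℂ))‖ := by
    have h2 : (∑ w ∈ Finset.univ.erase (0 : ZMod m × ZMod m),
        kl m hm w.1 w.2 * ((G w : ℝ) : ℂ)) = -((m.totient : ℝ) * (S.card:ℝ)^2 : ℝ) := by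
      have h3 : (∑ w ∈ Finset.univ.erase (0 : ZMod m × ZMod m),
          kl m hm w.1 w.2 * ((G w : ℝ) : ℂ))
          = -(kl m hm (0:ZMod m × ZMod m).1 (0:ZMod m × ZMod m).2 * ((G 0 : ℝ) : ℂ)) := by
        rw [eq_neg_iff_add_eq_zero]
        exact hsplit
      rw [h3, hkl0, hG00]
      push_cast
      ring_nf
    rw [h2, norm_neg, Complex.norm_real, Real.norm_eq_abs]
    exact (_root_.abs_of_nonneg (by positivity)).symm
  have hbound : ‖
      (∑ w ∈ Finset.univ.erase (0 : ZMod m × ZMod m), kl m hm w.1 w.2 * ((G w : ℝ) : ℂ))‖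
      ≤ lam * ((m:ℝ)^2 * S.card) := by
    calc ‖(∑ w ∈ Finset.univ.erase (0 : ZMod m × ZMod m),
          kl m hm w.1 w.2 * ((G w : ℝ) : ℂ))‖
        ≤ ∑ w ∈ Finset.univ.erase (0 : ZMod m × ZMod m),
          ‖kl m hm w.1 w.2 * ((G w : ℝ) : ℂ)‖ := by
          exact norm_sum_le _ _
      _ ≤ ∑ w ∈ Finset.univ.erase (0 : ZMod m × ZMod m), lam * G w := by
          refine Finset.sum_le_sum fun w hw => ?_
          rw [norm_mul, Complex.norm_real, Real.norm_eq_abs, _root_.abs_of_nonneg (hG0 w)]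
          exact mul_le_mul_of_nonneg_right
            (hlam w (Finset.ne_of_mem_erase hw)) (hG0 w)
      _ ≤ ∑ w : ZMod m × ZMod m, lam * G w := by
          refine Finset.sum_le_sum_of_subset_of_nonneg (Finset.erase_subset _ _) ?_
          intro w _ _
          exact mul_nonneg hlam0 (hG0 w)
      _ = lam * ((m:ℝ)^2 * S.card) := by
          rw [← Finset.mul_sum, hpar]
  rw [← heq] at hbound
  rcases Nat.eq_zero_or_pos S.card with hc | hc
  · rw [hc]
    simp
    positivity
  · have hc' : (0:ℝ) < S.card := by exact_mod_cast hc
    rw [sq] at hbound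
    have h3 : (m.totient : ℝ) * S.card * S.card ≤ lam * (m:ℝ)^2 * S.card := by
      calc (m.totient : ℝ) * S.card * S.card
          = (m.totient : ℝ) * ((S.card:ℝ) * S.card) := by ring
        _ ≤ lam * ((m:ℝ)^2 * S.card) := hbound
        _ = lam * (m:ℝ)^2 * S.card := by ring
    exact le_of_mul_le_mul_right h3 hc'

end FourierAux

/-- For `p ≥ 5` prime and `n ≥ 1`, assuming the Estermann–Weil bound for
Kloosterman sums modulo `pⁿ`, the chromatic number of the hyperbola Cayley graph
on `(ℤ/pⁿℤ)²` is at least `√p/4`. -/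
theorem hyperbola_chromatic_lower (p n : ℕ) (hp : p.Prime) (hp5 : 5 ≤ p) (hn : 1 ≤ n)
    (hEW : ∀ u v : ZMod (p ^ n),
      ‖kl (p ^ n) (pow_ne_zero n hp.ne_zero) u v‖ ≤
        2 * Real.sqrt (Nat.gcd (Nat.gcd u.val v.val) (p ^ n)) * Real.sqrt (p ^ n)) :
    ∀ c : ℕ, (hgraph (ZMod (p ^ n))).Colorable c → Real.sqrt p / 4 ≤ c := by
  intro c hcol
  haveI : NeZero (p ^ n) := ⟨pow_ne_zero n hp.ne_zero⟩
  have hm5 : 5 ≤ p ^ n := le_trans hp5 (Nat.le_self_pow (by omega) p)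
  have hm2 : 1 < p ^ n := by omega
  rcases Nat.eq_zero_or_pos c with rfl | hc
  · exact ((hcol.some) ((0 : ZMod (p ^ n)), (0 : ZMod (p ^ n)))).elim0
  -- the coloring and its largest color class
  obtain ⟨C⟩ := hcol
  set Scl : Fin c → Finset (ZMod (p ^ n) × ZMod (p ^ n)) :=
    fun i => Finset.univ.filter (fun v => C v = i) with hScl
  have hcardsum : ∑ i : Fin c, (Scl i).card = (p ^ n)^2 := by
    have h1 := Finset.card_eq_sum_card_fiberwise
      (f := fun v : ZMod (p ^ n) × ZMod (p ^ n) => C v)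
      (s := Finset.univ) (t := Finset.univ) (fun v _ => Finset.mem_univ _)
    rw [Finset.card_univ] at h1
    rw [← h1]
    rw [Fintype.card_prod, ZMod.card]
    ring
  haveI : Nonempty (Fin c) := ⟨⟨0, hc⟩⟩
  obtain ⟨i, -, hmax⟩ := Finset.exists_max_image Finset.univ (fun i => (Scl i).card)
    ⟨Classical.arbitrary (Fin c), Finset.mem_univ _⟩
  have hi : (p ^ n)^2 ≤ c * (Scl i).card := by
    calc (p ^ n)^2 = ∑ j : Fin c, (Scl j).card := hcardsum.symm
      _ ≤ ∑ _j : Fin c, (Scl i).card :=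
          Finset.sum_le_sum (fun j _ => hmax j (Finset.mem_univ j))
      _ = c * (Scl i).card := by
          rw [Finset.sum_const, Finset.card_univ, Fintype.card_fin, smul_eq_mul]
  have hindep : ∀ s ∈ Scl i, ∀ t ∈ Scl i, ¬ (hgraph (ZMod (p ^ n))).Adj s t := by
    intro s hs t ht hadj
    rw [hScl, Finset.mem_filter] at hs ht
    exact C.valid hadj (hs.2.trans ht.2.symm)
  -- the eigenvalue bound
  set lam : ℝ := 2 * Real.sqrt ((p:ℝ) ^ (n - 1)) * Real.sqrt ((p:ℝ) ^ n) with hlamdef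
  have hlam0 : (0:ℝ) ≤ lam := by positivity
  have hlam : ∀ w : ZMod (p ^ n) × ZMod (p ^ n), w ≠ 0 →
      ‖kl (p ^ n) (pow_ne_zero n hp.ne_zero) w.1 w.2‖ ≤ lam := by
    intro w hw
    refine le_trans (hEW w.1 w.2) ?_
    have hgle : Nat.gcd (Nat.gcd w.1.val w.2.val) (p ^ n) ≤ p ^ (n - 1) := by
      set g := Nat.gcd (Nat.gcd w.1.val w.2.val) (p ^ n) with hg
      have hgd : g ∣ p ^ n := Nat.gcd_dvd_right _ _
      obtain ⟨k, hk, hgk⟩ := (Nat.dvd_prime_pow hp).mp hgd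
      have hkn : k ≠ n := by
        intro hkeq
        have hgn : g = p ^ n := by rw [hgk, hkeq]
        have h1 : (p ^ n) ∣ Nat.gcd w.1.val w.2.val :=
          (dvd_of_eq hgn.symm).trans (Nat.gcd_dvd_left (w.1.val.gcd w.2.val) (p ^ n))
        have hu : w.1 = 0 := by
          rw [← ZMod.val_eq_zero]
          exact Nat.eq_zero_of_dvd_of_lt (h1.trans (Nat.gcd_dvd_left _ _)) (ZMod.val_lt w.1)
        have hv : w.2 = 0 := by
          rw [← ZMod.val_eq_zero]
          exact Nat.eq_zero_of_dvd_of_lt (h1.trans (Nat.gcd_dvd_right _ _)) (ZMod.val_lt w.2)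
        exact hw (Prod.ext hu hv)
      rw [hgk]
      exact Nat.pow_le_pow_right hp.pos (by omega)
    rw [hlamdef]
    have h2 : Real.sqrt (Nat.gcd (Nat.gcd w.1.val w.2.val) (p ^ n))
        ≤ Real.sqrt ((p:ℝ) ^ (n - 1)) := Real.sqrt_le_sqrt (by exact_mod_cast hgle)
    have h3 : (0:ℝ) ≤ Real.sqrt ((p:ℝ) ^ n) := Real.sqrt_nonneg _
    nlinarith [Real.sqrt_nonneg ((Nat.gcd (Nat.gcd w.1.val w.2.val) (p ^ n) : ℝ))]
  have hmain := main_ineq (pow_ne_zero n hp.ne_zero) hm2 (Scl i) hindep lam hlam0 hlam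
  -- totient value
  have ht : (p ^ n).totient = p ^ (n - 1) * (p - 1) := Nat.totient_prime_pow hp (by omega)
  -- simplify lam
  have hp0 : (0:ℝ) < p := by exact_mod_cast hp.pos
  have hsqrt : Real.sqrt ((p:ℝ) ^ (n - 1)) * Real.sqrt ((p:ℝ) ^ n)
      = (p:ℝ) ^ (n - 1) * Real.sqrt p := by
    rw [← Real.sqrt_mul (by positivity)]
    have h4 : (p:ℝ) ^ (n - 1) * (p:ℝ) ^ n = ((p:ℝ) ^ (n - 1))^2 * p := by
      rw [← pow_add, ← pow_mul, ← pow_succ]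
      congr 1
      omega
    rw [h4, Real.sqrt_mul (by positivity), Real.sqrt_sq (by positivity)]
  -- assemble
  have hX : (0:ℝ) < ((p ^ n : ℕ) : ℝ)^2 := by
    have : (0:ℝ) < ((p ^ n : ℕ) : ℝ) := by exact_mod_cast Nat.pos_of_ne_zero (pow_ne_zero n hp.ne_zero)
    positivity
  have h5 : ((p ^ n).totient : ℝ) ≤ c * lam := by
    have h6 : ((p ^ n).totient : ℝ) * ((p ^ n : ℕ) : ℝ)^2
        ≤ (c * lam) * ((p ^ n : ℕ) : ℝ)^2 := by
      have h7 : ((p ^ n : ℕ) : ℝ)^2 ≤ (c : ℝ) * (Scl i).card := by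
        exact_mod_cast hi
      calc ((p ^ n).totient : ℝ) * ((p ^ n : ℕ) : ℝ)^2
          ≤ ((p ^ n).totient : ℝ) * ((c:ℝ) * (Scl i).card) := by
            exact mul_le_mul_of_nonneg_left h7 (by positivity)
        _ = (c:ℝ) * (((p ^ n).totient : ℝ) * (Scl i).card) := by ring
        _ ≤ (c:ℝ) * (lam * ((p ^ n : ℕ) : ℝ)^2) := by
            refine mul_le_mul_of_nonneg_left ?_ (by positivity)
            exact_mod_cast hmain
        _ = (c * lam) * ((p ^ n : ℕ) : ℝ)^2 := by ring
    exact le_of_mul_le_mul_right h6 hX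
  -- turn into (p-1) ≤ 2 c √p
  have hpn1 : (0:ℝ) < (p:ℝ) ^ (n - 1) := by positivity
  have h8 : (p:ℝ) - 1 ≤ (c:ℝ) * (2 * Real.sqrt p) := by
    have h9 : ((p ^ n).totient : ℝ) = (p:ℝ) ^ (n - 1) * ((p:ℝ) - 1) := by
      rw [ht]
      push_cast [Nat.cast_sub hp.one_lt.le]
      ring
    have h10 : lam = 2 * ((p:ℝ) ^ (n - 1) * Real.sqrt p) := by
      rw [hlamdef, mul_assoc, hsqrt]
    rw [h9, h10] at h5
    have h11 : (p:ℝ) ^ (n - 1) * ((p:ℝ) - 1)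
        ≤ (p:ℝ) ^ (n - 1) * ((c:ℝ) * (2 * Real.sqrt p)) := by
      calc (p:ℝ) ^ (n - 1) * ((p:ℝ) - 1) ≤ (c:ℝ) * (2 * ((p:ℝ) ^ (n - 1) * Real.sqrt p)) := h5
        _ = (p:ℝ) ^ (n - 1) * ((c:ℝ) * (2 * Real.sqrt p)) := by ring
    exact le_of_mul_le_mul_left h11 hpn1
  -- final arithmetic
  have hs2 : Real.sqrt p * Real.sqrt p = (p:ℝ) := Real.mul_self_sqrt hp0.le
  have hs0 : (0:ℝ) ≤ Real.sqrt p := Real.sqrt_nonneg _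
  have hp5' : (5:ℝ) ≤ (p:ℝ) := by exact_mod_cast hp5
  nlinarith [h8, hs2, hs0, hp5']
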